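/- Let k ≥ 2, let a₁, …, a_k ∈ (0,1) with a₁ + ⋯ + a_k = 1, let (μ₁, σ₁), …, (μ_k, σ_k) be pairwise distinct pairs with each σ_j > 0, let μ₀ ∈ ℝ and σ₀ > 0, and let f : ℝ → ℝ be an admissible flow such that the pushforward of N(μ₀, σ₀²) under f equals the finite mixture Σ_{j=1}^{k} a_j · N(μ_j, σ_j²). Then there exists j ∈ {1, …, k} such that the pushforward of N(μ_j, σ_j²) under f⁻¹ is not a Gaussian measure: there are no μ ∈ ℝ and σ > 0 with (f⁻¹)_* N(μ_j, σ_j²) = N(μ, σ²). -/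

import Mathlib

open MeasureTheory ProbabilityTheory Real Filter
open scoped NNReal ENNReal

lemma pdf_mul_exp (m : ℝ) (v : ℝ≥0) (hv : v ≠ 0) (t x : ℝ) :
    gaussianPDFReal m v x * Real.exp (t * x)
      = Real.exp (m*t + v*t^2/2) * gaussianPDFReal (m + v*t) v x := by
  have hv' : (v:ℝ) ≠ 0 := by exact_mod_cast hv
  simp only [gaussianPDFReal]
  have key : -(x - m)^2/(2*(v:ℝ)) + t*x
      = (m*t + (v:ℝ)*t^2/2) + (-(x - (m+(v:ℝ)*t))^2/(2*(v:ℝ))) := by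
    field_simp
    ring
  rw [mul_assoc, ← Real.exp_add, key, Real.exp_add]
  ring

lemma integrable_exp_gaussianReal (m : ℝ) (v : ℝ≥0) (hv : v ≠ 0) (t : ℝ) :
    Integrable (fun x => Real.exp (t * x)) (gaussianReal m v) := by
  rw [gaussianReal_of_var_ne_zero m hv, gaussianPDF_def]
  rw [integrable_withDensity_iff ((measurable_gaussianPDFReal m v).ennreal_ofReal)
    (by simp [ENNReal.ofReal_lt_top])]
  have : (fun x => Real.exp (t*x) * (ENNReal.ofReal (gaussianPDFReal m v x)).toReal)
      = fun x => Real.exp (m*t + v*t^2/2) * gaussianPDFReal (m + v*t) v x := by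
    funext x
    rw [ENNReal.toReal_ofReal (gaussianPDFReal_nonneg m v x), mul_comm, pdf_mul_exp m v hv t x]
  rw [this]
  exact (integrable_gaussianPDFReal _ _).const_mul _

lemma integral_exp_gaussianReal (m : ℝ) (v : ℝ≥0) (hv : v ≠ 0) (t : ℝ) :
    ∫ x, Real.exp (t * x) ∂(gaussianReal m v) = Real.exp (m*t + v*t^2/2) := by
  rw [gaussianReal_of_var_ne_zero m hv, gaussianPDF_def]
  have : (fun x => ENNReal.ofReal (gaussianPDFReal m v x))
      = fun x => ((gaussianPDFReal m v x).toNNReal : ℝ≥0∞) := rfl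
  rw [this, integral_withDensity_eq_integral_smul ((measurable_gaussianPDFReal m v).real_toNNReal) _]
  have : (fun x => (gaussianPDFReal m v x).toNNReal • Real.exp (t*x))
      = fun x => Real.exp (m*t + v*t^2/2) * gaussianPDFReal (m + v*t) v x := by
    funext x
    rw [NNReal.smul_def, Real.coe_toNNReal _ (gaussianPDFReal_nonneg m v x), smul_eq_mul,
      pdf_mul_exp m v hv t x]
  rw [this, integral_const_mul, integral_gaussianPDFReal_eq_one _ hv, mul_one]

/-- The Gaussian probability measure `N(m, s²)` on `ℝ`. -/
noncomputable def gauss (m s : ℝ) : Measure ℝ :=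
  gaussianReal m ⟨s ^ 2, sq_nonneg s⟩

lemma gauss_var_ne_zero {s : ℝ} (hs : 0 < s) : (⟨s ^ 2, sq_nonneg s⟩ : ℝ≥0) ≠ 0 := by
  intro h
  have := congrArg NNReal.toReal h
  change s ^ 2 = 0 at this
  exact (pow_ne_zero 2 hs.ne') this

lemma mgf_gauss (m s : ℝ) (hs : 0 < s) (t : ℝ) :
    ∫ x, Real.exp (t * x) ∂(gauss m s) = Real.exp (m*t + s^2*t^2/2) := by
  rw [gauss, integral_exp_gaussianReal m _ (gauss_var_ne_zero hs) t]
  rfl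

lemma integrable_exp_gauss (m s : ℝ) (hs : 0 < s) (t : ℝ) :
    Integrable (fun x => Real.exp (t * x)) (gauss m s) :=
  integrable_exp_gaussianReal m _ (gauss_var_ne_zero hs) t

lemma gauss_inj {m1 s1 m2 s2 : ℝ} (h1 : 0 < s1) (h2 : 0 < s2)
    (h : gauss m1 s1 = gauss m2 s2) : m1 = m2 ∧ s1 = s2 := by
  have e1 := mgf_gauss m1 s1 h1 1
  have e2 := mgf_gauss m1 s1 h1 (-1)
  rw [h, mgf_gauss m2 s2 h2 1] at e1
  rw [h, mgf_gauss m2 s2 h2 (-1)] at e2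
  have e1' := Real.exp_injective e1
  have e2' := Real.exp_injective e2
  have hm : m1 = m2 := by nlinarith
  have hs : s1^2 = s2^2 := by nlinarith
  refine ⟨hm, ?_⟩
  have := congrArg Real.sqrt hs
  rwa [Real.sqrt_sq h1.le, Real.sqrt_sq h2.le] at this

lemma map_sum_smul {ι : Type*} (s : Finset ι) (c : ι → ℝ≥0∞) (ν : ι → Measure ℝ)
    {g : ℝ → ℝ} (hg : Measurable g) :
    Measure.map g (∑ i ∈ s, c i • ν i) = ∑ i ∈ s, c i • Measure.map g (ν i) := by
  classical
  induction s using Finset.induction_on with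
  | empty => simp
  | insert _ _ h ih =>
    rw [Finset.sum_insert h, Measure.map_add _ _ hg, Measure.map_smul, ih, Finset.sum_insert h]

lemma key_lemma (k : ℕ) (hk : 2 ≤ k) (a b c : Fin k → ℝ) (hapos : ∀ j, 0 < a j)
    (hsum : ∑ j, a j = 1)
    (hinj : Function.Injective (fun j => (b j, c j)))
    (h : ∀ t : ℝ, ∑ j, a j * Real.exp (b j * t + c j * t^2/2) = 1) : False := by
  classical
  -- each term bounded by 1
  have hbound : ∀ (j : Fin k) (t : ℝ), a j * Real.exp (b j * t + c j * t^2/2) ≤ 1 := by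
    intro j t
    rw [← h t]
    exact Finset.single_le_sum (f := fun i => a i * Real.exp (b i * t + c i * t^2/2))
      (fun i _ => mul_nonneg (hapos i).le (Real.exp_nonneg _)) (Finset.mem_univ j)
  have hcase : ∀ j : Fin k, c j < 0 ∨ (b j = 0 ∧ c j = 0) := by
    intro j
    set K := Real.log (1 / a j) with hKdef
    have hK : ∀ t, b j * t + c j * t^2/2 ≤ K := by
      intro t
      have h1 := hbound j t
      have h2 : Real.exp (b j * t + c j * t^2/2) ≤ 1 / a j := by
        rw [le_div_iff₀ (hapos j)]
        linarith [mul_comm (a j) (Real.exp (b j * t + c j * t^2/2))]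
      have h3 : (0:ℝ) < 1 / a j := div_pos one_pos (hapos j)
      have := h2.trans_eq (Real.exp_log h3).symm
      exact Real.exp_le_exp.mp this
    rcases lt_trichotomy (c j) 0 with hc | hc | hc
    · exact Or.inl hc
    · refine Or.inr ⟨?_, hc⟩
      by_contra hb
      have ht := hK ((|K| + 1) / b j)
      rw [hc] at ht
      have : b j * ((|K| + 1) / b j) = |K| + 1 := by field_simp
      rw [this] at ht
      have := le_abs_self K
      linarith
    · exfalso
      set t := max 1 (2 * (|b j| + |K| + 1) / c j) with htdef
      have ht1 : (1:ℝ) ≤ t := le_max_left _ _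
      have ht2 : 2 * (|b j| + |K| + 1) / c j ≤ t := le_max_right _ _
      have ht2' : 2 * (|b j| + |K| + 1) ≤ t * c j := by
        rw [div_le_iff₀ hc] at ht2
        linarith
      have hKt := hK t
      have hb1 := neg_abs_le (b j)
      have hK1 := le_abs_self K
      have hKnn := abs_nonneg K
      have hbnn := abs_nonneg (b j)
      nlinarith [mul_le_mul_of_nonneg_left ht2' (by linarith : (0:ℝ) ≤ t),
        mul_le_mul_of_nonneg_right hb1 (by linarith : (0:ℝ) ≤ t)]
  -- limits
  set S := Finset.univ.filter (fun j : Fin k => b j = 0 ∧ c j = 0) with hSdef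
  set L := ∑ j ∈ S, a j with hLdef
  have htend : Tendsto (fun t => ∑ j, a j * Real.exp (b j * t + c j * t^2/2)) atTop
      (nhds (∑ j, if b j = 0 ∧ c j = 0 then a j else 0)) := by
    refine tendsto_finset_sum _ (fun j _ => ?_)
    by_cases hj : b j = 0 ∧ c j = 0
    · simp only [hj, if_true, hj.1, hj.2, zero_mul, zero_div, add_zero, Real.exp_zero, mul_one]
      exact tendsto_const_nhds
    · simp only [hj, if_false]
      have hc : c j < 0 := by
        rcases hcase j with h' | h'
        · exact h'
        · exact absurd h' hj
      have hexp : Tendsto (fun t : ℝ => b j * t + c j * t^2/2) atTop atBot := by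
        have heq : (fun t : ℝ => b j * t + c j * t^2/2) = fun t => t * (b j + c j * t / 2) := by
          funext t; ring
        rw [heq]
        apply Tendsto.atTop_mul_atBot₀ tendsto_id
        have : Tendsto (fun t : ℝ => c j / 2 * t) atTop atBot :=
          Tendsto.const_mul_atTop_of_neg (by linarith) tendsto_id
        have := tendsto_atBot_add_const_left atTop (b j) this
        refine this.congr (fun t => by ring)
      have : Tendsto (fun t => a j * Real.exp (b j * t + c j * t^2/2)) atTop
          (nhds (a j * 0)) :=
        Tendsto.const_mul _ (Real.tendsto_exp_atBot.comp hexp)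
      simpa using this
  have hconst : Tendsto (fun t : ℝ => ∑ j, a j * Real.exp (b j * t + c j * t^2/2)) atTop
      (nhds 1) := by
    have : (fun t : ℝ => ∑ j, a j * Real.exp (b j * t + c j * t^2/2)) = fun _ => 1 :=
      funext h
    rw [this]
    exact tendsto_const_nhds
  have hL1 : (∑ j, if b j = 0 ∧ c j = 0 then a j else 0) = 1 :=
    tendsto_nhds_unique htend hconst
  rw [← Finset.sum_filter] at hL1
  -- but the filtered sum is < 1
  have hcard : S.card ≤ 1 := by
    by_contra hc
    push_neg at hc
    obtain ⟨i, hi, j, hj, hij⟩ := Finset.one_lt_card.mp hc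
    simp only [hSdef, Finset.mem_filter] at hi hj
    exact hij (hinj (by simp [hi.2.1, hi.2.2, hj.2.1, hj.2.2]))
  have hSne : S ≠ Finset.univ := by
    intro hS
    rw [hS, Finset.card_univ, Fintype.card_fin] at hcard
    omega
  obtain ⟨i, _, hiS⟩ := Finset.exists_of_ssubset ((Finset.subset_univ S).ssubset_of_ne hSne)
  have hlt : ∑ j ∈ S, a j < ∑ j, a j :=
    Finset.sum_lt_sum_of_subset (Finset.subset_univ S) (Finset.mem_univ i) hiS (hapos i)
      (fun j _ _ => (hapos j).le)
  rw [hsum, hL1] at hlt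
  exact lt_irrefl _ hlt

/-- `f` is an admissible flow: a bijection, continuously differentiable, with
nonvanishing derivative. -/
def IsAdmissibleFlow (f : ℝ → ℝ) : Prop :=
  Function.Bijective f ∧ ContDiff ℝ 1 f ∧ ∀ z : ℝ, deriv f z ≠ 0

theorem stmt9 (k : ℕ) (hk : 2 ≤ k)
    (a : Fin k → ℝ) (ha : ∀ j, a j ∈ Set.Ioo (0 : ℝ) 1)
    (hsum : ∑ j, a j = 1)
    (μ σ : Fin k → ℝ) (hσ : ∀ j, 0 < σ j)
    (hdist : Function.Injective (fun j => (μ j, σ j)))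
    (μ₀ σ₀ : ℝ) (hσ₀ : 0 < σ₀)
    (f : ℝ → ℝ) (hf : IsAdmissibleFlow f)
    (hpush : Measure.map f (gauss μ₀ σ₀)
      = ∑ j, ENNReal.ofReal (a j) • gauss (μ j) (σ j)) :
    ∃ j : Fin k, ¬ ∃ (m : ℝ) (s : ℝ), 0 < s ∧
        Measure.map (Function.invFun f) (gauss (μ j) (σ j)) = gauss m s := by
  by_contra hcon
  push_neg at hcon
  choose m s hs hmap using hcon
  obtain ⟨hbij, hcd, _⟩ := hf
  have hcont : Continuous f := hcd.continuous
  have hfm : Measurable f := hcont.measurable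
  have hemb : MeasurableEmbedding f := hcont.measurableEmbedding hbij.1
  set g := Function.invFun f with hgdef
  have hgf : Function.LeftInverse g f := Function.leftInverse_invFun hbij.1
  have hfg : Function.RightInverse g f := Function.rightInverse_invFun hbij.2
  have hgm : Measurable g := by
    intro S hS
    have himg : g ⁻¹' S = f '' S := by
      ext x
      constructor
      · intro hx; exact ⟨g x, hx, hfg x⟩
      · rintro ⟨y, hy, rfl⟩
        simpa [Set.mem_preimage, hgf y] using hy
    rw [himg]
    exact hemb.measurableSet_image' hS
  have hmapf : ∀ j, Measure.map f (gauss (m j) (s j)) = gauss (μ j) (σ j) := by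
    intro j
    rw [← hmap j, Measure.map_map hfm hgm]
    have : f ∘ g = id := funext hfg
    rw [this, Measure.map_id]
  -- the measure equation
  have heq : gauss μ₀ σ₀ = ∑ j, ENNReal.ofReal (a j) • gauss (m j) (s j) := by
    have h0 : Measure.map g (Measure.map f (gauss μ₀ σ₀)) = gauss μ₀ σ₀ := by
      rw [Measure.map_map hgm hfm]
      have : g ∘ f = id := funext hgf
      rw [this, Measure.map_id]
    rw [← h0, hpush, map_sum_smul _ _ _ hgm]
    exact Finset.sum_congr rfl (fun j _ => by rw [hmap j])
  -- mgf identity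
  have hmgf : ∀ t : ℝ, Real.exp (μ₀*t + σ₀^2*t^2/2)
      = ∑ j, a j * Real.exp (m j * t + (s j)^2*t^2/2) := by
    intro t
    have lhs := mgf_gauss μ₀ σ₀ hσ₀ t
    rw [heq] at lhs
    rw [integral_finset_sum_measure (fun j _ =>
      (integrable_exp_gauss (m j) (s j) (hs j) t).smul_measure ENNReal.ofReal_ne_top)] at lhs
    rw [← lhs]
    refine Finset.sum_congr rfl (fun j _ => ?_)
    rw [integral_smul_measure, mgf_gauss (m j) (s j) (hs j) t,
      ENNReal.toReal_ofReal (ha j).1.le, smul_eq_mul]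
  -- injectivity of (m, s)
  have hms : Function.Injective (fun j => (m j, s j)) := by
    intro i j hij
    have hm : m i = m j := congrArg Prod.fst hij
    have hs' : s i = s j := congrArg Prod.snd hij
    have : gauss (μ i) (σ i) = gauss (μ j) (σ j) := by
      rw [← hmapf i, ← hmapf j, hm, hs']
    obtain ⟨h1, h2⟩ := gauss_inj (hσ i) (hσ j) this
    exact hdist (by simp [h1, h2])
  -- apply the key lemma
  refine key_lemma k hk a (fun j => m j - μ₀) (fun j => (s j)^2 - σ₀^2)
    (fun j => (ha j).1) hsum ?_ ?_
  · intro i j hij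
    have h1 : m i - μ₀ = m j - μ₀ := congrArg Prod.fst hij
    have h2 : (s i)^2 - σ₀^2 = (s j)^2 - σ₀^2 := congrArg Prod.snd hij
    have hm : m i = m j := by linarith
    have hsq : (s i)^2 = (s j)^2 := by linarith
    have hss : s i = s j := by
      have := congrArg Real.sqrt hsq
      rwa [Real.sqrt_sq (hs i).le, Real.sqrt_sq (hs j).le] at this
    exact hms (by simp [hm, hss])
  · intro t
    have e := hmgf t
    have expand : ∀ j : Fin k, a j * Real.exp ((m j - μ₀) * t + ((s j)^2 - σ₀^2) * t^2/2)
        = (a j * Real.exp (m j * t + (s j)^2*t^2/2)) * Real.exp (-(μ₀*t + σ₀^2*t^2/2)) := by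
      intro j
      rw [mul_assoc, ← Real.exp_add,
        show m j * t + (s j)^2*t^2/2 + -(μ₀*t + σ₀^2*t^2/2)
          = (m j - μ₀) * t + ((s j)^2 - σ₀^2) * t^2/2 from by ring]
    rw [Finset.sum_congr rfl (fun j _ => expand j), ← Finset.sum_mul, ← e, ← Real.exp_add,
      show μ₀*t + σ₀^2*t^2/2 + -(μ₀*t + σ₀^2*t^2/2) = 0 from by ring, Real.exp_zero]
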